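/- For γ ∈ (0,1), the Sibuya probability mass function satisfies f_γ(k) ~ (1/π) sin(γπ) Γ(1+γ) k^{-(γ+1)} as k → ∞; in particular the Sibuya distribution with parameter γ ∈ (0,1) has infinite mean. -/

import Mathlib

open Real Filter Topology

/-- The Sibuya probability mass function: `f_γ(k) = (γ/k!) ∏_{j=1}^{k-1} (j-γ)`. -/
noncomputable def sibuya (γ : ℝ) (k : ℕ) : ℝ :=
  γ / (Nat.factorial k) * ∏ j ∈ Finset.Icc 1 (k - 1), ((j : ℝ) - γ)

lemma sibuya_prodIcc (γ : ℝ) (m : ℕ) :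
    ∏ j ∈ Finset.Icc 1 m, ((j : ℝ) - γ) = ∏ j ∈ Finset.range m, ((1 - γ) + j) := by
  rw [← Finset.Ico_add_one_right_eq_Icc, Finset.prod_Ico_eq_prod_range]
  norm_num
  exact Finset.prod_congr rfl fun j _ => by ring

lemma sibuya_const_eq {γ : ℝ} (h0 : 0 < γ) (h1 : γ < 1) :
    (1 / π) * Real.sin (γ * π) * Real.Gamma (1 + γ) = γ / Real.Gamma (1 - γ) := by
  have hπ : (0:ℝ) < π := Real.pi_pos
  have hs : 0 < Real.sin (π * γ) := Real.sin_pos_of_pos_of_lt_pi (by positivity) (by nlinarith)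
  have hΓγ : 0 < Real.Gamma γ := Real.Gamma_pos_of_pos h0
  have hΓ1 : 0 < Real.Gamma (1 - γ) := Real.Gamma_pos_of_pos (by linarith)
  have hr : Real.Gamma γ * Real.Gamma (1 - γ) = π / Real.sin (π * γ) :=
    Real.Gamma_mul_Gamma_one_sub γ
  have hΓa : Real.Gamma (1 + γ) = γ * Real.Gamma γ := by
    rw [add_comm, Real.Gamma_add_one (ne_of_gt h0)]
  rw [hΓa, mul_comm γ π]
  rw [eq_div_iff hΓ1.ne', show 1 / π * Real.sin (π * γ) * (γ * Real.Gamma γ) * Real.Gamma (1 - γ)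
    = 1 / π * Real.sin (π * γ) * γ * (Real.Gamma γ * Real.Gamma (1 - γ)) by ring, hr]
  field_simp

lemma sibuya_ratio_eq {γ : ℝ} (h0 : 0 < γ) (h1 : γ < 1) (m : ℕ) :
    sibuya γ (m+3) / ((γ / Real.Gamma (1 - γ)) * ((m+3 : ℕ) : ℝ) ^ (-(γ + 1))) =
      (Real.Gamma (1-γ) / Real.GammaSeq (1-γ) ((m+3) - 2)) *
        ((((m+3:ℕ):ℝ) - 2)/((m+3:ℕ):ℝ)) ^ (1-γ) *
        (((m+3:ℕ):ℝ)/(((m+3:ℕ):ℝ) - 1)) := by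
  have hΓ1 : 0 < Real.Gamma (1 - γ) := Real.Gamma_pos_of_pos (by linarith)
  set x : ℝ := ((m:ℝ) + 3) with hx
  have hm0 : (0:ℝ) ≤ (m:ℝ) := Nat.cast_nonneg m
  have hx3 : ((m+3:ℕ):ℝ) = x := by push_cast [hx]; ring
  have hxpos : 0 < x := by positivity
  have hx2 : (0:ℝ) < x - 2 := by rw [hx]; linarith
  have hx1 : (0:ℝ) < x - 1 := by linarith
  set P : ℝ := ∏ j ∈ Finset.range (m + 2), ((1 - γ) + (j:ℝ)) with hPdef
  have hPpos : 0 < P := Finset.prod_pos fun j _ =>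
    add_pos_of_pos_of_nonneg (by linarith) (Nat.cast_nonneg j)
  have hGdef : Real.GammaSeq (1-γ) (m+1) = ((m+1:ℕ):ℝ) ^ (1-γ) * (Nat.factorial (m+1)) / P := by
    rw [Real.GammaSeq, hPdef]
  have hGpos : 0 < Real.GammaSeq (1-γ) (m+1) := by
    rw [hGdef]
    have h5 : (0:ℝ) < ((m+1:ℕ):ℝ) := by positivity
    have h6 : (0:ℝ) < ((m+1:ℕ):ℝ) ^ (1-γ) := Real.rpow_pos_of_pos h5 _
    have h7 : (0:ℝ) < ((Nat.factorial (m+1) : ℕ):ℝ) := by positivity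
    positivity
  have hm1c : ((m+1:ℕ):ℝ) = x - 2 := by push_cast [hx]; ring
  have hPG : P * Real.GammaSeq (1-γ) (m+1) = (x - 2) ^ (1-γ) * (Nat.factorial (m+1)) := by
    rw [hGdef, hm1c]; field_simp
  have hsib : sibuya γ (m+3) = γ / (Nat.factorial (m+3)) * P := by
    rw [sibuya, show m + 3 - 1 = m + 2 from rfl, sibuya_prodIcc, hPdef]
  have hfact : ((Nat.factorial (m+3) : ℕ) : ℝ) = x * (x - 1) * (Nat.factorial (m+1)) := by
    show ((Nat.factorial (m+1+2) : ℕ) : ℝ) = _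
    rw [Nat.factorial_succ, Nat.factorial_succ]
    push_cast [hx]; ring
  have hdiv : ((x - 2)/x) ^ (1-γ) = (x-2)^(1-γ) / x^(1-γ) :=
    Real.div_rpow hx2.le hxpos.le (1-γ)
  have hsum : x ^ (1-γ) * x ^ (γ+1) = x * x := by
    rw [← Real.rpow_add hxpos, show 1-γ+(γ+1) = (2:ℝ) by ring,
      show (2:ℝ) = ((2:ℕ):ℝ) by norm_num, Real.rpow_natCast]
    ring
  have hneg : x ^ (-(γ+1)) = (x ^ (γ+1))⁻¹ := Real.rpow_neg hxpos.le _
  have hxg : (0:ℝ) < x ^ (γ+1) := Real.rpow_pos_of_pos hxpos _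
  have hx1g : (0:ℝ) < x ^ (1-γ) := Real.rpow_pos_of_pos hxpos _
  have hfne : ((Nat.factorial (m+1) : ℕ) : ℝ) ≠ 0 := by positivity
  have hGne := hGpos.ne'
  rw [show m + 3 - 2 = m + 1 from rfl, hsib, hx3, hneg, hdiv]
  rw [hfact]
  have hPe : P = (x - 2) ^ (1-γ) * (Nat.factorial (m+1)) / Real.GammaSeq (1-γ) (m+1) := by
    rw [eq_div_iff hGne, hPG]
  have hae : x ^ (γ+1) = x * x / x ^ (1-γ) := by
    rw [eq_div_iff hx1g.ne', mul_comm, hsum]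
  have hx1ne : x - 1 ≠ 0 := hx1.ne'
  have hx2ne : x - 2 ≠ 0 := hx2.ne'
  have hx0ne : x ≠ 0 := hxpos.ne'
  have hγne : γ ≠ 0 := h0.ne'
  have hΓne : Real.Gamma (1 - γ) ≠ 0 := hΓ1.ne'
  rw [hPe, hae]
  field_simp

/-- For `γ ∈ (0,1)`, `f_γ(k) ~ (1/π) sin(γπ) Γ(1+γ) k^{-(γ+1)}` as `k → ∞`;
in particular the Sibuya distribution with parameter `γ ∈ (0,1)` has infinite mean. -/
theorem sibuya_tail_asymptotics (γ : ℝ) (hγ : γ ∈ Set.Ioo (0:ℝ) 1) :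
    Tendsto (fun k : ℕ =>
        sibuya γ k / ((1 / π) * Real.sin (γ * π) * Real.Gamma (1 + γ) * (k : ℝ) ^ (-(γ + 1))))
      atTop (𝓝 1) ∧
    ¬ Summable (fun k : ℕ => (k : ℝ) * sibuya γ k) := by
  obtain ⟨h0, h1⟩ := hγ
  have hπ : (0:ℝ) < π := Real.pi_pos
  have hΓ1 : 0 < Real.Gamma (1 - γ) := Real.Gamma_pos_of_pos (by linarith)
  have hΓne : Real.Gamma (1 - γ) ≠ 0 := hΓ1.ne'
  -- the three convergent factors
  have TA : Tendsto (fun k : ℕ => Real.Gamma (1-γ) / Real.GammaSeq (1-γ) (k - 2))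
      atTop (𝓝 1) := by
    have h := (Real.GammaSeq_tendsto_Gamma (1-γ)).comp (tendsto_sub_atTop_nat 2)
    have h2 : Tendsto (fun k : ℕ => Real.Gamma (1-γ) / Real.GammaSeq (1-γ) (k - 2))
        atTop (𝓝 (Real.Gamma (1-γ) / Real.Gamma (1-γ))) :=
      Tendsto.div tendsto_const_nhds h hΓne
    rwa [div_self hΓne] at h2
  have hb : Tendsto (fun k : ℕ => ((k:ℝ) - 2)/(k:ℝ)) atTop (𝓝 1) := by
    have h2 : Tendsto (fun k : ℕ => 1 - 2/(k:ℝ)) atTop (𝓝 (1 - 0)) :=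
      tendsto_const_nhds.sub (tendsto_const_div_atTop_nhds_zero_nat 2)
    rw [sub_zero] at h2
    refine h2.congr' ?_
    filter_upwards [eventually_ge_atTop 1] with k hk
    have : (k:ℝ) ≠ 0 := by positivity
    field_simp
  have TB : Tendsto (fun k : ℕ => (((k:ℝ) - 2)/(k:ℝ)) ^ (1-γ)) atTop (𝓝 1) := by
    have hc : ContinuousAt (fun x : ℝ => x ^ (1-γ)) 1 :=
      Real.continuousAt_rpow_const 1 (1-γ) (Or.inl one_ne_zero)
    have := hc.tendsto.comp hb
    rwa [Real.one_rpow] at this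
  have TC : Tendsto (fun k : ℕ => (k:ℝ)/((k:ℝ) - 1)) atTop (𝓝 1) := by
    have h3 : Tendsto (fun k : ℕ => (k:ℝ) + (-1)) atTop atTop :=
      tendsto_atTop_add_const_right atTop (-1) tendsto_natCast_atTop_atTop
    have h4 : Tendsto (fun k : ℕ => ((k:ℝ) + (-1))⁻¹) atTop (𝓝 0) :=
      h3.inv_tendsto_atTop
    have h5 : Tendsto (fun k : ℕ => 1 + ((k:ℝ) + (-1))⁻¹) atTop (𝓝 (1 + 0)) :=
      tendsto_const_nhds.add h4
    rw [add_zero] at h5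
    refine h5.congr' ?_
    filter_upwards [eventually_ge_atTop 2] with k hk
    have hk1 : (1:ℝ) ≤ (k:ℝ) - 1 := by
      have : (2:ℝ) ≤ (k:ℝ) := by exact_mod_cast hk
      linarith
    have hne : (k:ℝ) - 1 ≠ 0 := by linarith
    rw [← sub_eq_add_neg]
    field_simp
    ring
  have hmain : Tendsto (fun k : ℕ =>
      sibuya γ k / ((1 / π) * Real.sin (γ * π) * Real.Gamma (1 + γ) * (k : ℝ) ^ (-(γ + 1))))
      atTop (𝓝 1) := by
    have hT : Tendsto (fun k : ℕ =>
        (Real.Gamma (1-γ) / Real.GammaSeq (1-γ) (k - 2)) *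
          (((k:ℝ) - 2)/(k:ℝ)) ^ (1-γ) * ((k:ℝ)/((k:ℝ) - 1))) atTop (𝓝 (1 * 1 * 1)) :=
      (TA.mul TB).mul TC
    rw [show (1:ℝ) * 1 * 1 = 1 by norm_num] at hT
    refine hT.congr' ?_
    filter_upwards [eventually_ge_atTop 3] with k hk
    obtain ⟨m, rfl⟩ : ∃ m, k = m + 3 := ⟨k - 3, by omega⟩
    rw [sibuya_const_eq h0 h1, sibuya_ratio_eq h0 h1 m]
  refine ⟨hmain, fun hs => ?_⟩
  set C : ℝ := (1 / π) * Real.sin (γ * π) * Real.Gamma (1 + γ) with hC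
  have hCpos : 0 < C := by
    have hsin : 0 < Real.sin (γ * π) :=
      Real.sin_pos_of_pos_of_lt_pi (by positivity) (by nlinarith)
    have hΓ : 0 < Real.Gamma (1 + γ) := Real.Gamma_pos_of_pos (by linarith)
    positivity
  have hhalf : ∀ᶠ k : ℕ in atTop,
      (1:ℝ)/2 ≤ sibuya γ k / (C * (k : ℝ) ^ (-(γ + 1))) :=
    hmain.eventually (eventually_ge_nhds (by norm_num))
  have hO : (fun k : ℕ => (k:ℝ) ^ (-γ)) =O[atTop] (fun k : ℕ => (k:ℝ) * sibuya γ k) := by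
    rw [Asymptotics.isBigO_iff]
    refine ⟨2 / C, ?_⟩
    filter_upwards [hhalf, eventually_ge_atTop 1] with k hhk hk1
    have hkpos : (0:ℝ) < (k:ℝ) := by exact_mod_cast Nat.lt_of_lt_of_le Nat.zero_lt_one hk1
    have hr1 : (0:ℝ) < (k:ℝ) ^ (-(γ+1)) := Real.rpow_pos_of_pos hkpos _
    have hr2 : (0:ℝ) < (k:ℝ) ^ (-γ) := Real.rpow_pos_of_pos hkpos _
    have hDne : C * (k:ℝ) ^ (-(γ+1)) ≠ 0 := by positivity
    have hsib : sibuya γ k = (sibuya γ k / (C * (k:ℝ) ^ (-(γ+1)))) * (C * (k:ℝ) ^ (-(γ+1))) :=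
      (div_mul_cancel₀ _ hDne).symm
    have hrw : (k:ℝ) ^ (-(γ+1)) * (k:ℝ) = (k:ℝ) ^ (-γ) := by
      have h := Real.rpow_add hkpos (-(γ+1)) 1
      rw [Real.rpow_one] at h
      rw [← h, show -(γ+1) + 1 = -γ by ring]
    have hks : (1:ℝ)/2 * (C * (k:ℝ) ^ (-γ)) ≤ (k:ℝ) * sibuya γ k := by
      calc (1:ℝ)/2 * (C * (k:ℝ) ^ (-γ))
          ≤ (sibuya γ k / (C * (k:ℝ) ^ (-(γ+1)))) * (C * (k:ℝ) ^ (-γ)) := by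
            apply mul_le_mul_of_nonneg_right hhk (by positivity)
        _ = (k:ℝ) * sibuya γ k := by
            rw [← hrw, show sibuya γ k / (C * (k:ℝ)^(-(γ+1))) * (C * ((k:ℝ)^(-(γ+1)) * (k:ℝ)))
              = (sibuya γ k / (C * (k:ℝ)^(-(γ+1))) * (C * (k:ℝ)^(-(γ+1)))) * (k:ℝ) by ring,
              div_mul_cancel₀ _ hDne]
            ring
    have hnn : (0:ℝ) ≤ (k:ℝ) * sibuya γ k := le_trans (by positivity) hks
    rw [Real.norm_eq_abs, Real.norm_eq_abs, abs_of_nonneg hr2.le, abs_of_nonneg hnn]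
    have h2C : (0:ℝ) < 2 / C := by positivity
    calc (k:ℝ) ^ (-γ) = 2 / C * ((1:ℝ)/2 * (C * (k:ℝ) ^ (-γ))) := by
          field_simp
      _ ≤ 2 / C * ((k:ℝ) * sibuya γ k) := mul_le_mul_of_nonneg_left hks h2C.le
  have hsum2 : Summable (fun k : ℕ => (k:ℝ) ^ (-γ)) := summable_of_isBigO_nat hs hO
  rw [Real.summable_nat_rpow] at hsum2
  linarith
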